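/- With H_X F = ck·F(X) and H_X Y = (c/2)·X∧Y on a real inner product space (F skew-symmetric), one has H_Y(H_X F) − H_X(H_Y F) = −(c²k/2)·[F, X∧Y], where the action of H on a vector v produces the endomorphism-valued term via H_Y v = (c/2)Y∧v. Hence R(X,Y)F + H_Y H_X F − H_X H_Y F = −2ϖ·[X∧Y, F] where R(X,Y)F = [R(X,Y), F] = [−c·X∧Y, F] and ϖ = c(2−ck)/4. -/

import Mathlib

/-- The skew-symmetric endomorphism `X ∧ Y : Z ↦ ⟨Y,Z⟩X − ⟨X,Z⟩Y`. -/
noncomputable def wedge {V : Type*} [NormedAddCommGroup V] [InnerProductSpace ℝ V]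
    (X Y : V) : V → V :=
  fun Z => (inner ℝ Y Z : ℝ) • X - (inner ℝ X Z : ℝ) • Y

/-- Commutator `[A,B] = A ∘ B − B ∘ A` of two endomorphisms (as plain functions). -/
def commut {V : Type*} [AddCommGroup V] (A B : V → V) : V → V :=
  fun Z => A (B Z) - B (A Z)

theorem stmt_19 {V : Type*} [NormedAddCommGroup V] [InnerProductSpace ℝ V]
    (c k ϖ : ℝ) (hϖ : ϖ = c * (2 - c * k) / 4) (X Y : V)
    (F : V →ₗ[ℝ] V) (hF : ∀ u v : V, (inner ℝ (F u) v : ℝ) = -(inner ℝ u (F v) : ℝ)) :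
    -- `H_Y(H_X F) − H_X(H_Y F) = −(c²k/2)[F, X∧Y]`, where
    -- `H_X F = ck F(X)` and `H_Y v = (c/2) Y∧v`:
    (∀ z : V,
      (c / 2) • wedge Y ((c * k) • F X) z - (c / 2) • wedge X ((c * k) • F Y) z
        = -(c ^ 2 * k / 2) • commut F (wedge X Y) z) ∧
    -- hence `R(X,Y)F + H_Y H_X F − H_X H_Y F = −2ϖ [X∧Y, F]` with `R(X,Y)F = [−c X∧Y, F]`:
    (∀ z : V,
      (-c) • commut (wedge X Y) F z
          + ((c / 2) • wedge Y ((c * k) • F X) z - (c / 2) • wedge X ((c * k) • F Y) z)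
        = -(2 * ϖ) • commut (wedge X Y) F z) := by
  have key : ∀ z : V,
      (c / 2) • wedge Y ((c * k) • F X) z - (c / 2) • wedge X ((c * k) • F Y) z
        = -(c ^ 2 * k / 2) • commut F (wedge X Y) z := by
    intro z
    have h1 : (inner ℝ Y (F z) : ℝ) = -(inner ℝ (F Y) z : ℝ) := by rw [hF]; ring
    have h2 : (inner ℝ X (F z) : ℝ) = -(inner ℝ (F X) z : ℝ) := by rw [hF]; ring
    simp only [wedge, commut, map_sub, map_smul, inner_smul_left, inner_smul_right,
      RCLike.ofReal_real_eq_id, id_eq, starRingEnd_apply, star_trivial, h1, h2]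
    module
  refine ⟨key, fun z => ?_⟩
  have hc : ∀ z : V, commut F (wedge X Y) z = -commut (wedge X Y) F z := by
    intro z; simp only [commut, neg_sub]
  rw [key z, hc z, hϖ]
  module
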